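/- Let B → K and C → K be ring homomorphisms with C → K surjective, A = B ×_K C, and let (M_B, M_C, M_K; α, β) be a triple where M_B is a B-module, M_C a C-module, M_K a K-module, with isomorphisms α : M_B ⊗_B K ≅ M_K and β : M_C ⊗_C K ≅ M_K. Set M = M_B ×_{M_K} M_C (fiber product of A-modules). Then the natural map M ⊗_A C → M_C is surjective. -/
import Mathlib


open TensorProduct

/-- For a glued triple `(M_B, M_C, M_K; α, β)` over a Ferrand fiber product
`A = B ×_K C` and `M = M_B ×_{M_K} M_C`, the natural map `M ⊗_A C → M_C`
is surjective. Here `M` is encoded by its pullback universal property via the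
projections `πB`, `πC`. -/
theorem ferrand_glued_tensor_surjective
    (A B C K : Type*) [CommRing A] [CommRing B] [CommRing C] [CommRing K]
    [Algebra A B] [Algebra A C] [Algebra A K] [Algebra B K] [Algebra C K]
    [IsScalarTower A B K] [IsScalarTower A C K]
    (hsurj : Function.Surjective (algebraMap C K))
    (hpull : ∀ (b : B) (c : C), algebraMap B K b = algebraMap C K c →
      ∃! a : A, algebraMap A B a = b ∧ algebraMap A C a = c)
    (MB MC MK : Type*)
    [AddCommGroup MB] [Module B MB] [Module A MB] [IsScalarTower A B MB]
    [AddCommGroup MC] [Module C MC] [Module A MC] [IsScalarTower A C MC]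
    [AddCommGroup MK] [Module K MK]
    (α : (K ⊗[B] MB) ≃ₗ[K] MK) (β : (K ⊗[C] MC) ≃ₗ[K] MK)
    (M : Type*) [AddCommGroup M] [Module A M]
    (πB : M →ₗ[A] MB) (πC : M →ₗ[A] MC)
    (hcompat : ∀ m : M, α ((1 : K) ⊗ₜ[B] πB m) = β ((1 : K) ⊗ₜ[C] πC m))
    (hfib : ∀ (x : MB) (y : MC), α ((1 : K) ⊗ₜ[B] x) = β ((1 : K) ⊗ₜ[C] y) →
      ∃! m : M, πB m = x ∧ πC m = y) :
    Function.Surjective (LinearMap.liftBaseChange C πC : C ⊗[A] M →ₗ[C] MC) := by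
  intro y
  set f : C ⊗[A] M →ₗ[C] MC := LinearMap.liftBaseChange C πC with hf
  -- the map MC → K ⊗[C] MC, z ↦ 1 ⊗ z, is surjective
  have hmk : ∀ v : K ⊗[C] MC, ∃ z : MC, (1 : K) ⊗ₜ[C] z = v := by
    intro v
    induction v using TensorProduct.induction_on with
    | zero => exact ⟨0, by simp⟩
    | tmul k z =>
        obtain ⟨c, rfl⟩ := hsurj k
        refine ⟨c • z, ?_⟩
        rw [← TensorProduct.smul_tmul, Algebra.smul_def, mul_one]
    | add x y hx hy =>
        obtain ⟨zx, hzx⟩ := hx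
        obtain ⟨zy, hzy⟩ := hy
        exact ⟨zx + zy, by rw [TensorProduct.tmul_add, hzx, hzy]⟩
  -- every α v is β (1 ⊗ z) for some z in the range of f
  have key : ∀ v : K ⊗[B] MB, ∃ z ∈ LinearMap.range f,
      β ((1 : K) ⊗ₜ[C] z) = α v := by
    intro v
    induction v using TensorProduct.induction_on with
    | zero => exact ⟨0, Submodule.zero_mem _, by simp⟩
    | tmul k x =>
        obtain ⟨c, rfl⟩ := hsurj k
        obtain ⟨yx, hyx⟩ := hmk (β.symm (α ((1 : K) ⊗ₜ[B] x)))
        have hβyx : β ((1 : K) ⊗ₜ[C] yx) = α ((1 : K) ⊗ₜ[B] x) := by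
          rw [hyx, β.apply_symm_apply]
        obtain ⟨m, ⟨hmB, hmC⟩, -⟩ := hfib x yx hβyx.symm
        refine ⟨c • yx, ⟨c ⊗ₜ[A] m, by simp [hf, hmC]⟩, ?_⟩
        rw [← TensorProduct.smul_tmul, Algebra.smul_def, mul_one,
          show (algebraMap C K c) ⊗ₜ[C] yx
              = algebraMap C K c • ((1 : K) ⊗ₜ[C] yx) by
            rw [TensorProduct.smul_tmul', smul_eq_mul, mul_one],
          show (algebraMap C K c) ⊗ₜ[B] x
              = algebraMap C K c • ((1 : K) ⊗ₜ[B] x) by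
            rw [TensorProduct.smul_tmul', smul_eq_mul, mul_one],
          map_smul, map_smul, hβyx]
    | add v w hv hw =>
        obtain ⟨zv, hzv, hzv'⟩ := hv
        obtain ⟨zw, hzw, hzw'⟩ := hw
        refine ⟨zv + zw, Submodule.add_mem _ hzv hzw, ?_⟩
        rw [TensorProduct.tmul_add, map_add, hzv', hzw', map_add]
  obtain ⟨z, ⟨t, ht⟩, hz⟩ := key (α.symm (β ((1 : K) ⊗ₜ[C] y)))
  rw [α.apply_symm_apply] at hz
  have h0 : α ((1 : K) ⊗ₜ[B] (0 : MB)) = β ((1 : K) ⊗ₜ[C] (y - z)) := by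
    rw [TensorProduct.tmul_sub, map_sub, hz, sub_self, TensorProduct.tmul_zero,
      map_zero]
  obtain ⟨m', ⟨-, hm'C⟩, -⟩ := hfib 0 (y - z) h0
  refine ⟨t + (1 : C) ⊗ₜ[A] m', ?_⟩
  rw [map_add, ht]
  simp [hf, hm'C]
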